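/- The function T(x) := x(1−x)·(ln(1−x) − ln x)/((1−x) − x) is strictly monotonically increasing on the interval (0, 1/2). -/

import Mathlib

open Real Set

/-- auxiliary function -/
noncomputable def auxH (x : ℝ) : ℝ :=
  (x ^ 2 + (1 - x) ^ 2) * (Real.log (1 - x) - Real.log x) - (1 - 2 * x)

lemma auxH_hasDerivAt {x : ℝ} (hx0 : 0 < x) (hx1 : x < 1) :
    HasDerivAt auxH
      ((2 * x ^ 1 + 2 * (1 - x) ^ 1 * (-1)) * (Real.log (1 - x) - Real.log x)
        + (x ^ 2 + (1 - x) ^ 2) * (-1 / (1 - x) - x⁻¹) - (0 - 2 * 1)) x := by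
  have h1 : HasDerivAt (fun y : ℝ => 1 - y) (-1) x := by
    simpa using (hasDerivAt_id x).const_sub 1
  have hlog1 : HasDerivAt (fun y : ℝ => Real.log (1 - y)) (-1 / (1 - x)) x :=
    h1.log (by linarith)
  have hlogx : HasDerivAt Real.log x⁻¹ x := Real.hasDerivAt_log hx0.ne'
  have ha : HasDerivAt (fun y : ℝ => y ^ 2 + (1 - y) ^ 2)
      (2 * x ^ 1 + 2 * (1 - x) ^ 1 * (-1)) x := by
    have := (hasDerivAt_pow 2 x).fun_add ((h1.fun_pow 2))
    simpa using this
  have hb : HasDerivAt (fun y : ℝ => Real.log (1 - y) - Real.log y)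
      (-1 / (1 - x) - x⁻¹) x := hlog1.sub hlogx
  have hc : HasDerivAt (fun y : ℝ => 1 - 2 * y) (0 - 2 * 1) x :=
    (hasDerivAt_const x 1).sub ((hasDerivAt_id x).const_mul 2)
  exact (ha.mul hb).sub hc

lemma auxH_pos {x : ℝ} (hx : x ∈ Set.Ioo (0 : ℝ) (1 / 2)) : 0 < auxH x := by
  obtain ⟨hx0, hx2⟩ := hx
  have hanti : StrictAntiOn auxH (Set.Ioc (0 : ℝ) (1 / 2)) := by
    apply strictAntiOn_of_deriv_neg (convex_Ioc _ _)
    · intro y hy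
      have hy0 : 0 < y := hy.1
      have hy1 : y < 1 := by have := hy.2; linarith
      exact (auxH_hasDerivAt hy0 hy1).continuousAt.continuousWithinAt
    · intro y hy
      rw [interior_Ioc] at hy
      have hy0 : 0 < y := hy.1
      have hy2 : y < 1 / 2 := hy.2
      have hy1 : y < 1 := by linarith
      rw [(auxH_hasDerivAt hy0 hy1).deriv]
      have hL : 0 < Real.log (1 - y) - Real.log y := by
        have := Real.log_lt_log hy0 (by linarith : y < 1 - y)
        linarith
      have hy1' : (0:ℝ) < 1 - y := by linarith
      have heq : (2 * y ^ 1 + 2 * (1 - y) ^ 1 * (-1)) * (Real.log (1 - y) - Real.log y)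
          + (y ^ 2 + (1 - y) ^ 2) * (-1 / (1 - y) - y⁻¹) - (0 - 2 * 1)
          = (4 * y - 2) * (Real.log (1 - y) - Real.log y)
            - (1 - 2 * y) ^ 2 / (y * (1 - y)) := by
        field_simp
        ring
      rw [heq]
      have h1 : (4 * y - 2) * (Real.log (1 - y) - Real.log y) < 0 :=
        mul_neg_of_neg_of_pos (by linarith) hL
      have hdy : (0:ℝ) < 1 - 2 * y := by linarith
      have h2 : 0 < (1 - 2 * y) ^ 2 / (y * (1 - y)) :=
        div_pos (pow_pos hdy 2) (by positivity)
      linarith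
  have hmem : x ∈ Set.Ioc (0 : ℝ) (1 / 2) := ⟨hx0, hx2.le⟩
  have hmem2 : (1 / 2 : ℝ) ∈ Set.Ioc (0 : ℝ) (1 / 2) := by norm_num
  have := hanti hmem hmem2 hx2
  have hval : auxH (1 / 2) = 0 := by
    unfold auxH
    norm_num
  linarith [this, hval.symm ▸ this]

/-- `T(x) := x(1−x)(ln(1−x) − ln x)/((1−x) − x)` is strictly increasing
on `(0, 1/2)`. -/
theorem stmt_6 :
    StrictMonoOn
      (fun x : ℝ => x * (1 - x) * (Real.log (1 - x) - Real.log x) / ((1 - x) - x))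
      (Set.Ioo (0 : ℝ) (1 / 2)) := by
  have key : ∀ x ∈ Set.Ioo (0 : ℝ) (1 / 2),
      HasDerivAt (fun x : ℝ => x * (1 - x) * (Real.log (1 - x) - Real.log x) / ((1 - x) - x))
        (((( 1 * (1 - x) + x * (-1)) * (Real.log (1 - x) - Real.log x)
            + x * (1 - x) * (-1 / (1 - x) - x⁻¹)) * ((1 - x) - x)
          - x * (1 - x) * (Real.log (1 - x) - Real.log x) * (-1 - 1)) / ((1 - x) - x) ^ 2) x := by
    intro x hx
    have hx0 : 0 < x := hx.1
    have hx2 : x < 1 / 2 := hx.2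
    have hx1 : (0:ℝ) < 1 - x := by linarith
    have h1 : HasDerivAt (fun y : ℝ => 1 - y) (-1) x := by
      simpa using (hasDerivAt_id x).const_sub 1
    have hlog1 : HasDerivAt (fun y : ℝ => Real.log (1 - y)) (-1 / (1 - x)) x :=
      h1.log hx1.ne'
    have hlogx : HasDerivAt Real.log x⁻¹ x := Real.hasDerivAt_log hx0.ne'
    have hp : HasDerivAt (fun y : ℝ => y * (1 - y)) (1 * (1 - x) + x * (-1)) x :=
      (hasDerivAt_id x).mul h1
    have hu : HasDerivAt
        (fun y : ℝ => y * (1 - y) * (Real.log (1 - y) - Real.log y))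
        ((1 * (1 - x) + x * (-1)) * (Real.log (1 - x) - Real.log x)
          + x * (1 - x) * (-1 / (1 - x) - x⁻¹)) x :=
      hp.mul (hlog1.sub hlogx)
    have hv : HasDerivAt (fun y : ℝ => (1 - y) - y) (-1 - 1) x :=
      h1.sub (hasDerivAt_id x)
    exact hu.div hv (by intro h; linarith [h])
  apply strictMonoOn_of_deriv_pos (convex_Ioo _ _)
  · intro x hx
    exact (key x hx).continuousAt.continuousWithinAt
  · intro x hx
    rw [interior_Ioo] at hx
    rw [(key x hx).deriv]
    have hx0 : 0 < x := hx.1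
    have hx2 : x < 1 / 2 := hx.2
    have hx1 : (0:ℝ) < 1 - x := by linarith
    have hd : (0:ℝ) < 1 - 2 * x := by linarith
    have heq : (((1 * (1 - x) + x * (-1)) * (Real.log (1 - x) - Real.log x)
            + x * (1 - x) * (-1 / (1 - x) - x⁻¹)) * ((1 - x) - x)
          - x * (1 - x) * (Real.log (1 - x) - Real.log x) * (-1 - 1)) / ((1 - x) - x) ^ 2
        = auxH x / (1 - 2 * x) ^ 2 := by
      have hne0 : x ≠ 0 := hx0.ne'
      have hne1 : (1 - x) ≠ 0 := hx1.ne'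
      have hne2 : ((1 - x) - x) ≠ 0 := by intro h; linarith
      have hne3 : (1 - 2 * x) ≠ 0 := hd.ne'
      unfold auxH
      rw [show (1 - x) - x = 1 - 2 * x by ring]
      field_simp
      ring
    rw [heq]
    exact div_pos (auxH_pos hx) (by positivity)
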